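/- Let U be a non-principal ultrafilter on ω. Then the ultraproduct ∏_U P_i of the sequence of posets P_0, P_1, P_2, ... is (ω,ω)-representable. -/

import Mathlib

open Cardinal

universe u

/-- A field of sets: a collection of subsets of `X` closed under finite unions,
finite intersections, and complements. -/
def IsFieldOfSets {X : Type u} (F : Set (Set X)) : Prop :=
  ∅ ∈ F ∧ Set.univ ∈ F ∧ (∀ A ∈ F, ∀ B ∈ F, A ∪ B ∈ F) ∧
    (∀ A ∈ F, ∀ B ∈ F, A ∩ B ∈ F) ∧ (∀ A ∈ F, Aᶜ ∈ F)

/-- A poset `P` is `(α,β)`-representable if there is a field of sets `F` and an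
injective map `h : P → F` preserving all existing meets of sets of cardinality `< α`
and all existing joins of sets of cardinality `< β`. -/
def IsRepresentable (α β : Cardinal.{u}) (P : Type u) [PartialOrder P] : Prop :=
  ∃ (X : Type u) (F : Set (Set X)) (h : P → Set X),
    IsFieldOfSets F ∧ (∀ p : P, h p ∈ F) ∧ Function.Injective h ∧
    (∀ S : Set P, #S < α → ∀ a : P, IsGLB S a → h a = ⋂ s ∈ S, h s) ∧
    (∀ T : Set P, #T < β → ∀ a : P, IsLUB T a → h a = ⋃ t ∈ T, h t)

/-- The setoid on `∀ i, P i` identifying functions that agree on a set belonging to `U`. -/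
def upSetoid {ι : Type u} (U : Ultrafilter ι) (P : ι → Type u) : Setoid (∀ i, P i) where
  r x y := {i | x i = y i} ∈ U
  iseqv := by
    refine ⟨fun x => by
        rw [show {i | x i = x i} = Set.univ by simp]; exact Filter.univ_mem,
      fun {x y} h => ?_, fun {x y z} h1 h2 => ?_⟩
    · exact Filter.mem_of_superset h fun i hi => hi.symm
    · filter_upwards [h1, h2] with i hi1 hi2 using hi1.trans hi2

/-- The ultraproduct of the family `P` of posets over the ultrafilter `U`. -/
def UProd {ι : Type u} (U : Ultrafilter ι) (P : ι → Type u) : Type u :=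
  Quotient (upSetoid U P)

instance uprodPartialOrder {ι : Type u} (U : Ultrafilter ι) (P : ι → Type u)
    [∀ i, PartialOrder (P i)] : PartialOrder (UProd U P) where
  le := Quotient.lift₂ (fun x y => {i | x i ≤ y i} ∈ U) (by
    intro a₁ b₁ a₂ b₂ h₁ h₂
    apply propext
    constructor <;> intro h
    · filter_upwards [h, h₁, h₂] with i hle he1 he2
      rw [← he1, ← he2]; exact hle
    · filter_upwards [h, h₁, h₂] with i hle he1 he2
      rw [he1, he2]; exact hle)
  le_refl := by
    rintro ⟨x⟩
    show {i | x i ≤ x i} ∈ U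
    rw [show {i | x i ≤ x i} = Set.univ by simp]
    exact Filter.univ_mem
  le_trans := by
    rintro ⟨x⟩ ⟨y⟩ ⟨z⟩ h1 h2
    show {i | x i ≤ z i} ∈ U
    filter_upwards [(h1 : {i | x i ≤ y i} ∈ U), (h2 : {i | y i ≤ z i} ∈ U)] with i u1 u2
      using le_trans u1 u2
  le_antisymm := by
    rintro ⟨x⟩ ⟨y⟩ h1 h2
    apply Quotient.sound
    show {i | x i = y i} ∈ U
    filter_upwards [(h1 : {i | x i ≤ y i} ∈ U), (h2 : {i | y i ≤ x i} ∈ U)] with i u1 u2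
      using le_antisymm u1 u2

/-- The levels `N n`: `N 0` has four elements (`a`, `b`, `c`, `d`), and `N (n+1)` has one
element `e_{xy}` for each unordered pair of distinct elements `x`, `y` of `N n`. -/
def N : ℕ → Type
  | 0 => Fin 4
  | n + 1 => { s : Sym2 (N n) // ¬s.IsDiag }

/-- The element `e_{xy}` of `N (n+1)` corresponding to distinct `x y : N n`. -/
def mkE {n : ℕ} (x y : N n) (h : x ≠ y) : N (n + 1) :=
  ⟨s(x, y), by simp [h]⟩

/-- The carrier of the poset `P_k`: the elements `p`, `q`, the elements of `N n` for
`n ≤ k` (constructor `node`), and two elements `x'` (constructor `prime`) and `x''`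
(constructor `dprime`) for every element `x` of `N n` with `n ≤ k`. -/
inductive Elt (k : ℕ) : Type
  | p : Elt k
  | q : Elt k
  | node (n : ℕ) (hn : n ≤ k) (x : N n) : Elt k
  | prime (n : ℕ) (hn : n ≤ k) (x : N n) : Elt k
  | dprime (n : ℕ) (hn : n ≤ k) (x : N n) : Elt k

/-- The order on `P_k`: (1) `x < p` for `x ∈ N₀`; (2) `x < x'` and `x < x''` for
`x ∈ N_n`, `n ≤ k`; (3) `e_{xy} < x', x'', y', y''` for `e_{xy} ∈ N_{n+1}`, `n + 1 ≤ k`;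
(4) `q < x'` and `q < x''` for `x ∈ N_k`; (5) reflexivity; and nothing else. -/
inductive Le (k : ℕ) : Elt k → Elt k → Prop
  | refl (x : Elt k) : Le k x x
  | node_p (h0 : 0 ≤ k) (x : N 0) : Le k (.node 0 h0 x) .p
  | node_prime (n : ℕ) (hn : n ≤ k) (x : N n) : Le k (.node n hn x) (.prime n hn x)
  | node_dprime (n : ℕ) (hn : n ≤ k) (x : N n) : Le k (.node n hn x) (.dprime n hn x)
  | e_prime (n : ℕ) (hn : n + 1 ≤ k) (e : N (n + 1)) (x : N n) (hx : x ∈ e.1) :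
      Le k (.node (n + 1) hn e) (.prime n (Nat.le_of_succ_le hn) x)
  | e_dprime (n : ℕ) (hn : n + 1 ≤ k) (e : N (n + 1)) (x : N n) (hx : x ∈ e.1) :
      Le k (.node (n + 1) hn e) (.dprime n (Nat.le_of_succ_le hn) x)
  | q_prime (x : N k) : Le k .q (.prime k le_rfl x)
  | q_dprime (x : N k) : Le k .q (.dprime k le_rfl x)

lemma Le.eq_of_le_node {k n : ℕ} {x : Elt k} {hn : n ≤ k} {w : N n}
    (h : Le k x (Elt.node n hn w)) : x = Elt.node n hn w := by
  cases h; rfl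

lemma Le.eq_of_le_q {k : ℕ} {x : Elt k} (h : Le k x Elt.q) : x = Elt.q := by
  cases h; rfl

lemma Le.left_cases {k : ℕ} {x y : Elt k} (h : Le k x y) :
    x = y ∨ (∃ n hn w, x = Elt.node n hn w) ∨ x = Elt.q := by
  cases h with
  | refl => exact Or.inl rfl
  | node_p h0 w => exact Or.inr (Or.inl ⟨_, _, _, rfl⟩)
  | node_prime n hn w => exact Or.inr (Or.inl ⟨_, _, _, rfl⟩)
  | node_dprime n hn w => exact Or.inr (Or.inl ⟨_, _, _, rfl⟩)
  | e_prime n hn e w hw => exact Or.inr (Or.inl ⟨_, _, _, rfl⟩)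
  | e_dprime n hn e w hw => exact Or.inr (Or.inl ⟨_, _, _, rfl⟩)
  | q_prime w => exact Or.inr (Or.inr rfl)
  | q_dprime w => exact Or.inr (Or.inr rfl)

/-- `P_k` as a partial order, with order relation `Le k`. -/
instance EltPartialOrder (k : ℕ) : PartialOrder (Elt k) where
  le := Le k
  le_refl := Le.refl
  le_trans := by
    intro x y z h1 h2
    rcases h2.left_cases with rfl | ⟨n, hn, w, rfl⟩ | rfl
    · exact h1
    · rw [h1.eq_of_le_node]; exact h2
    · rw [h1.eq_of_le_q]; exact h2
  le_antisymm := by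
    intro x y h1 h2
    rcases h1.left_cases with rfl | ⟨n, hn, w, rfl⟩ | rfl
    · rfl
    · exact (h2.eq_of_le_node).symm
    · exact (h2.eq_of_le_q).symm

namespace S14

/-! ### Inversion lemmas for `Le` -/

variable {k : ℕ}

lemma p_le {y : Elt k} (h : Le k .p y) : y = .p := by cases h; rfl

lemma prime_le {n : ℕ} {hn : n ≤ k} {x : N n} {y : Elt k} (h : Le k (.prime n hn x) y) :
    y = .prime n hn x := by cases h; rfl

lemma dprime_le {n : ℕ} {hn : n ≤ k} {x : N n} {y : Elt k} (h : Le k (.dprime n hn x) y) :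
    y = .dprime n hn x := by cases h; rfl

lemma q_le {y : Elt k} (h : Le k .q y) :
    y = .q ∨ ∃ x : N k, y = .prime k le_rfl x ∨ y = .dprime k le_rfl x := by
  cases h with
  | refl => exact Or.inl rfl
  | q_prime x => exact Or.inr ⟨x, Or.inl rfl⟩
  | q_dprime x => exact Or.inr ⟨x, Or.inr rfl⟩

lemma le_p {x : Elt k} (h : Le k x .p) : x = .p ∨ ∃ h0 w, x = .node 0 h0 w := by
  cases h with
  | refl => exact Or.inl rfl
  | node_p h0 w => exact Or.inr ⟨h0, w, rfl⟩

lemma le_prime {n : ℕ} {hn : n ≤ k} {x : N n} {y : Elt k} (h : Le k y (.prime n hn x)) :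
    y = .prime n hn x ∨ y = .node n hn x ∨
    (∃ (h1 : n + 1 ≤ k) (e : N (n + 1)), x ∈ e.1 ∧ y = .node (n + 1) h1 e) ∨
    (n = k ∧ y = .q) := by
  cases h with
  | refl => exact Or.inl rfl
  | node_prime => exact Or.inr (Or.inl rfl)
  | e_prime m hm e w hw => exact Or.inr (Or.inr (Or.inl ⟨hm, e, hw, rfl⟩))
  | q_prime w => exact Or.inr (Or.inr (Or.inr ⟨rfl, rfl⟩))

lemma le_dprime {n : ℕ} {hn : n ≤ k} {x : N n} {y : Elt k} (h : Le k y (.dprime n hn x)) :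
    y = .dprime n hn x ∨ y = .node n hn x ∨
    (∃ (h1 : n + 1 ≤ k) (e : N (n + 1)), x ∈ e.1 ∧ y = .node (n + 1) h1 e) ∨
    (n = k ∧ y = .q) := by
  cases h with
  | refl => exact Or.inl rfl
  | node_dprime => exact Or.inr (Or.inl rfl)
  | e_dprime m hm e w hw => exact Or.inr (Or.inr (Or.inl ⟨hm, e, hw, rfl⟩))
  | q_dprime w => exact Or.inr (Or.inr (Or.inr ⟨rfl, rfl⟩))

lemma node_le {n : ℕ} {hn : n ≤ k} {x : N n} {y : Elt k} (h : Le k (.node n hn x) y) :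
    y = .node n hn x ∨ y = .prime n hn x ∨ y = .dprime n hn x ∨
    (n = 0 ∧ y = .p) ∨
    ∃ (m : ℕ) (hm : m + 1 ≤ k) (e : N (m + 1)) (w : N m), n = m + 1 ∧ HEq x e ∧ w ∈ e.1 ∧
      (y = .prime m (Nat.le_of_succ_le hm) w ∨ y = .dprime m (Nat.le_of_succ_le hm) w) := by
  cases h with
  | refl => exact Or.inl rfl
  | node_p => exact Or.inr (Or.inr (Or.inr (Or.inl ⟨rfl, rfl⟩)))
  | node_prime => exact Or.inr (Or.inl rfl)
  | node_dprime => exact Or.inr (Or.inr (Or.inl rfl))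
  | e_prime m hm e w hw =>
      exact Or.inr (Or.inr (Or.inr (Or.inr ⟨m, hm, e, w, rfl, HEq.rfl, hw, Or.inl rfl⟩)))
  | e_dprime m hm e w hw =>
      exact Or.inr (Or.inr (Or.inr (Or.inr ⟨m, hm, e, w, rfl, HEq.rfl, hw, Or.inr rfl⟩)))

lemma le_prime_imp_dprime {n : ℕ} {hn : n ≤ k} {x : N n} {y : Elt k}
    (h : Le k y (.prime n hn x)) : y = .prime n hn x ∨ Le k y (.dprime n hn x) := by
  rcases le_prime h with h1 | rfl | ⟨h1, e, hx, rfl⟩ | ⟨rfl, rfl⟩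
  · exact Or.inl h1
  · exact Or.inr (Le.node_dprime _ _ _)
  · exact Or.inr (Le.e_dprime _ h1 e x hx)
  · exact Or.inr (Le.q_dprime x)

lemma le_dprime_imp_prime {n : ℕ} {hn : n ≤ k} {x : N n} {y : Elt k}
    (h : Le k y (.dprime n hn x)) : y = .dprime n hn x ∨ Le k y (.prime n hn x) := by
  rcases le_dprime h with h1 | rfl | ⟨h1, e, hx, rfl⟩ | ⟨rfl, rfl⟩
  · exact Or.inl h1
  · exact Or.inr (Le.node_prime _ _ _)
  · exact Or.inr (Le.e_prime _ h1 e x hx)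
  · exact Or.inr (Le.q_prime x)

/-! ### Facts about `N n` -/

lemma finiteN : ∀ n, Finite (N n)
  | 0 => inferInstanceAs (Finite (Fin 4))
  | (n + 1) => by
    have : Finite (N n) := finiteN n
    have hsurj : Function.Surjective (fun p : N n × N n => Sym2.mk p.1 p.2) := by
      intro z
      exact Sym2.ind (f := fun z => ∃ p : N n × N n, Sym2.mk p.1 p.2 = z) (fun x y => ⟨(x, y), rfl⟩) z
    have : Finite (Sym2 (N n)) := Finite.of_surjective _ hsurj
    exact Subtype.finite

instance (n : ℕ) : Finite (N n) := finiteN n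

lemma threeN : ∀ n, ∃ a b c : N n, a ≠ b ∧ a ≠ c ∧ b ≠ c
  | 0 => ⟨show Fin 4 from 0, show Fin 4 from 1, show Fin 4 from 2, by intro h; exact absurd (congrArg Fin.val h) (by decide), by intro h; exact absurd (congrArg Fin.val h) (by decide), by intro h; exact absurd (congrArg Fin.val h) (by decide)⟩
  | (n + 1) => by
    obtain ⟨a, b, c, hab, hac, hbc⟩ := threeN n
    refine ⟨⟨s(a, b), by simp [Sym2.mk_isDiag_iff, hab]⟩,
            ⟨s(a, c), by simp [Sym2.mk_isDiag_iff, hac]⟩,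
            ⟨s(b, c), by simp [Sym2.mk_isDiag_iff, hbc]⟩, ?_, ?_, ?_⟩ <;>
      · intro h
        rcases Sym2.eq_iff.mp (Subtype.ext_iff.mp h) with ⟨h1, h2⟩ | ⟨h1, h2⟩ <;> simp_all

lemma exists_two_ne {n : ℕ} (g : N n) : ∃ x y : N n, x ≠ y ∧ x ≠ g ∧ y ≠ g := by
  obtain ⟨a, b, c, hab, hac, hbc⟩ := threeN n
  by_cases h : a = g
  · subst h
    exact ⟨b, c, hbc, Ne.symm hab, Ne.symm hac⟩
  · by_cases h2 : b = g
    · subst h2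
      exact ⟨a, c, hac, h, Ne.symm hbc⟩
    · exact ⟨a, b, hab, h, h2⟩

lemma exists_other_e {n : ℕ} (g : N n) (e : N (n + 1)) :
    ∃ e' : N (n + 1), g ∈ e'.1 ∧ e' ≠ e := by
  obtain ⟨x, y, hxy, hxg, hyg⟩ := exists_two_ne g
  set e1 : N (n + 1) := ⟨s(g, x), by simp [Sym2.mk_isDiag_iff, Ne.symm hxg]⟩ with he1
  set e2 : N (n + 1) := ⟨s(g, y), by simp [Sym2.mk_isDiag_iff, Ne.symm hyg]⟩ with he2
  have h12 : e1 ≠ e2 := by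
    intro h
    rcases Sym2.eq_iff.mp (Subtype.ext_iff.mp h) with ⟨h1, h2⟩ | ⟨h1, h2⟩ <;> simp_all
  by_cases h : e1 = e
  · exact ⟨e2, Sym2.mem_mk_left g y, fun hc => h12.symm (hc.trans h.symm)⟩
  · exact ⟨e1, Sym2.mem_mk_left g x, h⟩

/-- The "allowed" elements of `N n` generated by a set `S` of bottom-level elements. -/
def Gd (S : Set (Fin 4)) : (n : ℕ) → Set (N n)
  | 0 => S
  | (n + 1) => {e : N (n + 1) | ∀ a ∈ e.1, a ∈ Gd S n}

lemma mandatory : ∀ n (g : N (n + 1)), ∃ u v : Fin 4, u ≠ v ∧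
    ∀ S : Set (Fin 4), g ∈ Gd S (n + 1) → u ∈ S ∧ v ∈ S := by
  intro n
  induction n with
  | zero =>
    intro g
    obtain ⟨a, b, hab⟩ : ∃ a b : Fin 4, g.1 = s(a, b) :=
      Sym2.ind (f := fun z => ∀ hz : ¬ z.IsDiag, ∃ a b, (⟨z, hz⟩ : N 1).1 = s(a, b))
        (fun x y _ => ⟨x, y, rfl⟩) g.1 g.2
    have hne : a ≠ b := by
      intro h; exact g.2 (by rw [hab, h]; exact Sym2.mk_isDiag_iff.mpr rfl)
    refine ⟨a, b, hne, fun S hg => ⟨hg a ?_, hg b ?_⟩⟩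
    · rw [hab]; exact Sym2.mem_mk_left a b
    · rw [hab]; exact Sym2.mem_mk_right a b
  | succ m ih =>
    intro g
    obtain ⟨A, B, hab⟩ : ∃ A B : N (m + 1), g.1 = s(A, B) :=
      Sym2.ind (f := fun z => ∀ hz : ¬ z.IsDiag, ∃ a b, (⟨z, hz⟩ : N (m + 2)).1 = s(a, b))
        (fun x y _ => ⟨x, y, rfl⟩) g.1 g.2
    obtain ⟨u, v, huv, hS⟩ := ih A
    refine ⟨u, v, huv, fun S hg => hS S (hg A ?_)⟩
    rw [hab]; exact Sym2.mem_mk_left A B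


def swap {k : ℕ} : Elt k → Elt k
  | .prime n hn x => .dprime n hn x
  | .dprime n hn x => .prime n hn x
  | x => x

/-! ### Ultrafilter helpers -/

section UF
variable (U : Ultrafilter ℕ)

lemma mem_of_cofinite (hU : ∀ i : ℕ, U ≠ pure i) {A : Set ℕ} (h : Aᶜ.Finite) : A ∈ U := by
  rcases U.le_cofinite_or_eq_pure with hle | ⟨a, ha⟩
  · exact hle (Filter.mem_cofinite.mpr h)
  · exact absurd ha (hU a)

lemma not_mem_of_finite (hU : ∀ i : ℕ, U ≠ pure i) {A : Set ℕ} (h : A.Finite) : A ∉ U := by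
  intro hA
  have h2 : Aᶜ ∈ U := mem_of_cofinite U hU (by simpa using h)
  have h3 := Filter.inter_mem hA h2
  simp only [Set.inter_compl_self] at h3
  exact (Filter.empty_notMem (U : Filter ℕ)) h3

lemma ge_mem (hU : ∀ i : ℕ, U ≠ pure i) (n : ℕ) : {k | n ≤ k} ∈ U := by
  apply mem_of_cofinite U hU
  have : {k : ℕ | n ≤ k}ᶜ ⊆ {k | k < n} := by
    intro k hk
    simpa using hk
  exact (Set.finite_lt_nat n).subset this

lemma const_of_finite {α : Type} [Finite α] (g : ℕ → α) {A : Set ℕ} (hA : A ∈ U) :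
    ∃ a : α, {k | k ∈ A ∧ g k = a} ∈ U := by
  by_contra hcon
  push_neg at hcon
  have h2 : ∀ a : α, {k | k ∈ A ∧ g k = a}ᶜ ∈ U := fun a =>
    Ultrafilter.compl_mem_iff_notMem.mpr (hcon a)
  have h3 : (⋂ a : α, {k | k ∈ A ∧ g k = a}ᶜ) ∈ U := Filter.iInter_mem.mpr h2
  obtain ⟨k, hk1, hk2⟩ := Filter.nonempty_of_mem (Filter.inter_mem hA h3)
  have := Set.mem_iInter.mp hk2 (g k)
  exact this ⟨hk1, rfl⟩

lemma usplit {A B C : Set ℕ} (h : A ∈ U) (himp : ∀ k ∈ A, k ∈ B ∨ k ∈ C) :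
    B ∈ U ∨ C ∈ U :=
  Ultrafilter.union_mem_iff.mp (Filter.mem_of_superset h himp)

end UF

/-! ### The ultraproduct and its canonical elements -/

section Q
variable (U : Ultrafilter ℕ)

def mkQ (x : ∀ k, Elt k) : UProd U Elt := Quotient.mk (upSetoid U Elt) x

lemma mkQ_surjective (c : UProd U Elt) : ∃ x, c = mkQ U x := by
  obtain ⟨x, hx⟩ := Quotient.exists_rep c
  exact ⟨x, hx.symm⟩

lemma mkQ_le {x y : ∀ k, Elt k} : mkQ U x ≤ mkQ U y ↔ {k | Le k (x k) (y k)} ∈ U := Iff.rfl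

lemma mkQ_eq {x y : ∀ k, Elt k} : mkQ U x = mkQ U y ↔ {k | x k = y k} ∈ U :=
  ⟨Quotient.exact, fun h => Quot.sound h⟩

def pF : ∀ k, Elt k := fun _ => .p
def qF : ∀ k, Elt k := fun _ => .q
def nodeF (n : ℕ) (g : N n) : ∀ k, Elt k := fun k =>
  if h : n ≤ k then .node n h g else .q
def primeF (n : ℕ) (g : N n) : ∀ k, Elt k := fun k =>
  if h : n ≤ k then .prime n h g else .q
def dprimeF (n : ℕ) (g : N n) : ∀ k, Elt k := fun k =>
  if h : n ≤ k then .dprime n h g else .q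

/-- The "cloud" generated by a set `S` of bottom-level elements: a good filter-like
upset of the ultraproduct. -/
def cloud (S : Set (Fin 4)) : Set (UProd U Elt) :=
  {c | c = mkQ U pF ∨ ∃ n g, g ∈ Gd S n ∧
    (c = mkQ U (nodeF n g) ∨ c = mkQ U (primeF n g) ∨ c = mkQ U (dprimeF n g))}

/-- A subset of the ultraproduct preserving all existing finite meets and joins. -/
def Good (f : UProd U Elt → Prop) : Prop :=
  (∀ S : Set (UProd U Elt), S.Finite → ∀ c, IsGLB S c → (f c ↔ ∀ s ∈ S, f s)) ∧
  (∀ T : Set (UProd U Elt), T.Finite → ∀ c, IsLUB T c → (f c ↔ ∃ t ∈ T, f t))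

lemma good_of (f : UProd U Elt → Prop)
    (hup : ∀ a b, a ≤ b → f a → f b)
    (hm : ∀ S', S'.Finite → ∀ c, IsGLB S' c → (∀ s ∈ S', f s) → f c)
    (hj : ∀ T, T.Finite → ∀ c, IsLUB T c → f c → ∃ t ∈ T, f t) : Good U f := by
  constructor
  · intro S hS c hglb
    exact ⟨fun hc s hs => hup _ _ (hglb.1 hs) hc, hm S hS c hglb⟩
  · intro T hT c hlub
    exact ⟨hj T hT c hlub, fun ⟨t, ht, hft⟩ => hup _ _ (hlub.1 ht) hft⟩

lemma representable_of_separating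
    (H : ∀ a b : UProd U Elt, ¬ a ≤ b → ∃ f, Good U f ∧ f a ∧ ¬ f b) :
    IsRepresentable ℵ₀ ℵ₀ (UProd U Elt) := by
  refine ⟨{f : UProd U Elt → Prop // Good U f}, Set.univ, fun a => {f | f.1 a},
    ⟨trivial, trivial, fun _ _ _ _ => trivial, fun _ _ _ _ => trivial, fun _ _ => trivial⟩,
    fun _ => trivial, ?_, ?_, ?_⟩
  · intro a b hab
    by_contra hne
    have h2 : ¬ a ≤ b ∨ ¬ b ≤ a := by
      by_contra h3
      push_neg at h3
      exact hne (le_antisymm h3.1 h3.2)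
    rw [Set.ext_iff] at hab
    rcases h2 with h2 | h2
    · obtain ⟨f, hf, hfa, hfb⟩ := H a b h2
      exact hfb ((hab ⟨f, hf⟩).mp hfa)
    · obtain ⟨f, hf, hfb, hfa⟩ := H b a h2
      exact hfa ((hab ⟨f, hf⟩).mpr hfb)
  · intro S hS c hglb
    have hfin : S.Finite := Cardinal.lt_aleph0_iff_set_finite.mp hS
    ext f
    simp only [Set.mem_setOf_eq, Set.mem_iInter]
    exact f.2.1 S hfin c hglb
  · intro T hT c hlub
    have hfin : T.Finite := Cardinal.lt_aleph0_iff_set_finite.mp hT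
    ext f
    simp only [Set.mem_setOf_eq, Set.mem_iUnion]
    constructor
    · intro hc
      obtain ⟨t, ht, hft⟩ := ((f.2.2 T hfin c hlub).mp hc)
      exact ⟨t, ht, hft⟩
    · rintro ⟨t, ht, hft⟩
      exact (f.2.2 T hfin c hlub).mpr ⟨t, ht, hft⟩

end Q

section Classify
variable (U : Ultrafilter ℕ)

lemma ctype_split (cf : ∀ k, Elt k) :
    {k | cf k = .p} ∈ U ∨ {k | cf k = .q} ∈ U ∨
    {k | ∃ n hn x, cf k = .node n hn x} ∈ U ∨
    {k | ∃ n hn x, cf k = .prime n hn x} ∈ U ∨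
    {k | ∃ n hn x, cf k = .dprime n hn x} ∈ U := by
  by_contra hcon
  push_neg at hcon
  obtain ⟨h1, h2, h3, h4, h5⟩ := hcon
  have m1 := Ultrafilter.compl_mem_iff_notMem.mpr h1
  have m2 := Ultrafilter.compl_mem_iff_notMem.mpr h2
  have m3 := Ultrafilter.compl_mem_iff_notMem.mpr h3
  have m4 := Ultrafilter.compl_mem_iff_notMem.mpr h4
  have m5 := Ultrafilter.compl_mem_iff_notMem.mpr h5
  obtain ⟨k, hk⟩ := Filter.nonempty_of_mem
    (Filter.inter_mem m1 (Filter.inter_mem m2 (Filter.inter_mem m3 (Filter.inter_mem m4 m5))))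
  simp only [Set.mem_inter_iff, Set.mem_compl_iff, Set.mem_setOf_eq] at hk
  obtain ⟨k1, k2, k3, k4, k5⟩ := hk
  cases hc : cf k with
  | p => exact k1 hc
  | q => exact k2 hc
  | node n hn x => exact k3 ⟨n, hn, x, hc⟩
  | prime n hn x => exact k4 ⟨n, hn, x, hc⟩
  | dprime n hn x => exact k5 ⟨n, hn, x, hc⟩

lemma lub_classify {T : Set (UProd U Elt)} {c : UProd U Elt}
    (h : IsLUB T c) : c ∈ T ∨ c = mkQ U pF := by
  by_contra hcon
  push_neg at hcon
  obtain ⟨hcT, hcp⟩ := hcon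
  obtain ⟨cf, rfl⟩ := mkQ_surjective U c
  rcases T.eq_empty_or_nonempty with rfl | ⟨t0, ht0⟩
  · have h1 : mkQ U cf ≤ mkQ U qF := h.2 (fun x hx => absurd hx (Set.notMem_empty x))
    have h2 : mkQ U cf ≤ mkQ U pF := h.2 (fun x hx => absurd hx (Set.notMem_empty x))
    obtain ⟨k, hk1, hk2⟩ := Filter.nonempty_of_mem (Filter.inter_mem h1 h2)
    have hq : cf k = .q := Le.eq_of_le_q (show Le k (cf k) Elt.q from hk1)
    have hk2' : Le k (cf k) Elt.p := hk2
    rw [hq] at hk2'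
    cases hk2'
  rcases ctype_split U cf with hp | hq | hnode | hprime | hdprime
  · exact hcp ((mkQ_eq U).mpr hp)
  · obtain ⟨tf, rfl⟩ := mkQ_surjective U t0
    have hle : {k | Le k (tf k) (cf k)} ∈ U := h.1 ht0
    have hne : {k | tf k = cf k}ᶜ ∈ U := Ultrafilter.compl_mem_iff_notMem.mpr
      (fun hh => hcT (((mkQ_eq U).mpr hh) ▸ ht0))
    obtain ⟨k, hk1, hk2, hk3⟩ := Filter.nonempty_of_mem
      (Filter.inter_mem hle (Filter.inter_mem hne hq))
    rw [Set.mem_setOf_eq] at hk3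
    have hk1' : Le k (tf k) (cf k) := hk1
    rw [hk3] at hk1'
    exact hk2 ((Le.eq_of_le_q hk1').trans hk3.symm)
  · obtain ⟨tf, rfl⟩ := mkQ_surjective U t0
    have hle : {k | Le k (tf k) (cf k)} ∈ U := h.1 ht0
    have hne : {k | tf k = cf k}ᶜ ∈ U := Ultrafilter.compl_mem_iff_notMem.mpr
      (fun hh => hcT (((mkQ_eq U).mpr hh) ▸ ht0))
    obtain ⟨k, hk1, hk2, hk3⟩ := Filter.nonempty_of_mem
      (Filter.inter_mem hle (Filter.inter_mem hne hnode))
    obtain ⟨n, hn, x, heq⟩ := hk3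
    have hk1' : Le k (tf k) (cf k) := hk1
    rw [heq] at hk1'
    exact hk2 ((Le.eq_of_le_node hk1').trans heq.symm)
  · have hub : mkQ U (fun k => swap (cf k)) ∈ upperBounds T := by
      rintro t ht
      obtain ⟨tf, rfl⟩ := mkQ_surjective U t
      have hle : {k | Le k (tf k) (cf k)} ∈ U := h.1 ht
      have hne : {k | tf k = cf k}ᶜ ∈ U := Ultrafilter.compl_mem_iff_notMem.mpr
        (fun hh => hcT (((mkQ_eq U).mpr hh) ▸ ht))
      rw [mkQ_le]
      filter_upwards [hle, hne, hprime] with k hk1 hk2 hk3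
      obtain ⟨n, hn, x, heq⟩ := hk3
      have hk1' : Le k (tf k) (cf k) := hk1
      rw [heq] at hk1'
      rcases le_prime_imp_dprime hk1' with h4 | h4
      · exact absurd (h4.trans heq.symm) hk2
      · show Le k (tf k) (swap (cf k))
        rw [heq]
        exact h4
    have hcz := h.2 hub
    obtain ⟨k, hk1, hk2⟩ := Filter.nonempty_of_mem (Filter.inter_mem hcz hprime)
    obtain ⟨n, hn, x, heq⟩ := hk2
    have hk1' : Le k (cf k) (swap (cf k)) := hk1
    rw [heq] at hk1'
    have := prime_le hk1'
    simp only [swap] at this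
    cases this
  · have hub : mkQ U (fun k => swap (cf k)) ∈ upperBounds T := by
      rintro t ht
      obtain ⟨tf, rfl⟩ := mkQ_surjective U t
      have hle : {k | Le k (tf k) (cf k)} ∈ U := h.1 ht
      have hne : {k | tf k = cf k}ᶜ ∈ U := Ultrafilter.compl_mem_iff_notMem.mpr
        (fun hh => hcT (((mkQ_eq U).mpr hh) ▸ ht))
      rw [mkQ_le]
      filter_upwards [hle, hne, hdprime] with k hk1 hk2 hk3
      obtain ⟨n, hn, x, heq⟩ := hk3
      have hk1' : Le k (tf k) (cf k) := hk1
      rw [heq] at hk1'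
      rcases le_dprime_imp_prime hk1' with h4 | h4
      · exact absurd (h4.trans heq.symm) hk2
      · show Le k (tf k) (swap (cf k))
        rw [heq]
        exact h4
    have hcz := h.2 hub
    obtain ⟨k, hk1, hk2⟩ := Filter.nonempty_of_mem (Filter.inter_mem hcz hdprime)
    obtain ⟨n, hn, x, heq⟩ := hk2
    have hk1' : Le k (cf k) (swap (cf k)) := hk1
    rw [heq] at hk1'
    have := dprime_le hk1'
    simp only [swap] at this
    cases this

lemma good_up (a : UProd U Elt) (hap : ¬ a ≤ mkQ U pF) : Good U (fun c => a ≤ c) := by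
  constructor
  · intro S hS c hglb
    exact ⟨fun hc s hs => le_trans hc (hglb.1 hs), fun hall => hglb.2 hall⟩
  · intro T hT c hlub
    constructor
    · intro hc
      rcases lub_classify U hlub with hcT | rfl
      · exact ⟨c, hcT, hc⟩
      · exact absurd hc hap
    · rintro ⟨t, ht, hat⟩
      exact le_trans hat (hlub.1 ht)

end Classify

section Cloud
variable (U : Ultrafilter ℕ)

lemma N_succ_coords {n : ℕ} (g : N (n + 1)) : ∃ a b : N n, a ≠ b ∧ g.1 = s(a, b) := by
  obtain ⟨a, b, hab⟩ :=
    Sym2.ind (f := fun z => ∃ x y, z = s(x, y)) (fun x y => ⟨x, y, rfl⟩) g.1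
  refine ⟨a, b, ?_, hab⟩
  intro h
  exact g.2 (by rw [hab, h]; exact Sym2.mk_isDiag_iff.mpr rfl)

lemma usplit3 {A B C D : Set ℕ} (h : A ∈ U) (himp : ∀ k ∈ A, k ∈ B ∨ k ∈ C ∨ k ∈ D) :
    B ∈ U ∨ C ∈ U ∨ D ∈ U := by
  rcases usplit U h
    (fun k hk => ((himp k hk).imp_right (fun h' => (Set.mem_union k C D).mpr h'))) with h1 | h1
  · exact Or.inl h1
  · exact Or.inr (Ultrafilter.union_mem_iff.mp h1)

lemma usplit4 {A B C D E : Set ℕ} (h : A ∈ U)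
    (himp : ∀ k ∈ A, k ∈ B ∨ k ∈ C ∨ k ∈ D ∨ k ∈ E) :
    B ∈ U ∨ C ∈ U ∨ D ∈ U ∨ E ∈ U := by
  rcases usplit3 U h (fun k hk => (himp k hk).imp_right
      (fun h' => h'.imp_right (fun h'' => (Set.mem_union k D E).mpr h''))) with h1 | h1 | h1
  · exact Or.inl h1
  · exact Or.inr (Or.inl h1)
  · exact Or.inr (Or.inr (Ultrafilter.union_mem_iff.mp h1))

lemma cloud_upset (hU : ∀ i : ℕ, U ≠ pure i) (S : Set (Fin 4)) :
    ∀ a ∈ cloud U S, ∀ b, a ≤ b → b ∈ cloud U S := by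
  rintro a ha b hab
  obtain ⟨bf, rfl⟩ := mkQ_surjective U b
  rcases ha with rfl | ⟨n, g, hg, rfl | rfl | rfl⟩
  · left
    rw [mkQ_eq]
    have h1 : {k | Le k (pF k) (bf k)} ∈ U := hab
    filter_upwards [h1] with k hk
    exact p_le hk
  · -- a = nodeF n g
    have h1 : {k | Le k (nodeF n g k) (bf k)} ∈ U := hab
    have hA : {k | ∃ h : n ≤ k, Le k (.node n h g) (bf k)} ∈ U := by
      filter_upwards [h1, ge_mem U hU n] with k hk1 hk2
      refine ⟨hk2, ?_⟩
      simpa only [nodeF, dif_pos hk2] using hk1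
    rcases n with _ | m
    · -- level 0
      have himp : ∀ k ∈ {k | ∃ h : (0:ℕ) ≤ k, Le k (.node 0 h g) (bf k)},
          k ∈ {k | bf k = nodeF 0 g k} ∨ k ∈ {k | bf k = primeF 0 g k} ∨
          k ∈ {k | bf k = dprimeF 0 g k} ∨ k ∈ {k | bf k = pF k} := by
        rintro k ⟨hnk, hle⟩
        rcases node_le hle with h2 | h2 | h2 | ⟨_, h2⟩ | ⟨m', hm', e, w, hnm, _, _, _⟩
        · exact Or.inl (by simp only [Set.mem_setOf_eq, nodeF, dif_pos hnk]; exact h2)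
        · exact Or.inr (Or.inl (by simp only [Set.mem_setOf_eq, primeF, dif_pos hnk]; exact h2))
        · exact Or.inr (Or.inr (Or.inl
            (by simp only [Set.mem_setOf_eq, dprimeF, dif_pos hnk]; exact h2)))
        · exact Or.inr (Or.inr (Or.inr h2))
        · exact absurd hnm (by omega)
      rcases usplit4 U hA himp with hB | hB | hB | hB
      · exact Or.inr ⟨0, g, hg, Or.inl ((mkQ_eq U).mpr hB)⟩
      · exact Or.inr ⟨0, g, hg, Or.inr (Or.inl ((mkQ_eq U).mpr hB))⟩
      · exact Or.inr ⟨0, g, hg, Or.inr (Or.inr ((mkQ_eq U).mpr hB))⟩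
      · exact Or.inl ((mkQ_eq U).mpr hB)
    · -- level m + 1
      obtain ⟨a1, b1, hab1, hg1⟩ := N_succ_coords g
      have ha1 : a1 ∈ Gd S m := hg a1 (by rw [hg1]; exact Sym2.mem_mk_left a1 b1)
      have hb1 : b1 ∈ Gd S m := hg b1 (by rw [hg1]; exact Sym2.mem_mk_right a1 b1)
      have himp : ∀ k ∈ {k | ∃ h : m + 1 ≤ k, Le k (.node (m + 1) h g) (bf k)},
          k ∈ {k | bf k = nodeF (m + 1) g k} ∨ k ∈ {k | bf k = primeF (m + 1) g k} ∨
          k ∈ {k | bf k = dprimeF (m + 1) g k} ∨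
          k ∈ ({k | bf k = primeF m a1 k} ∪ ({k | bf k = dprimeF m a1 k} ∪
                ({k | bf k = primeF m b1 k} ∪ {k | bf k = dprimeF m b1 k}))) := by
        rintro k ⟨hnk, hle⟩
        have hmk : m ≤ k := Nat.le_of_succ_le hnk
        rcases node_le hle with h2 | h2 | h2 | ⟨h0, _⟩ | ⟨m', hm', e, w, hnm, heqg, hw, hy⟩
        · exact Or.inl (by simp only [Set.mem_setOf_eq, nodeF, dif_pos hnk]; exact h2)
        · exact Or.inr (Or.inl
            (by simp only [Set.mem_setOf_eq, primeF, dif_pos hnk]; exact h2))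
        · exact Or.inr (Or.inr (Or.inl
            (by simp only [Set.mem_setOf_eq, dprimeF, dif_pos hnk]; exact h2)))
        · exact absurd h0 (by omega)
        · have hm2 : m' = m := by omega
          subst hm2
          have heg : g = e := eq_of_heq heqg
          subst heg
          rw [hg1] at hw
          refine Or.inr (Or.inr (Or.inr ?_))
          rcases Sym2.mem_iff.mp hw with rfl | rfl
          · rcases hy with h2 | h2
            · exact Or.inl (by simp only [Set.mem_setOf_eq, primeF, dif_pos hmk]; exact h2)
            · exact Or.inr (Or.inl
                (by simp only [Set.mem_setOf_eq, dprimeF, dif_pos hmk]; exact h2))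
          · rcases hy with h2 | h2
            · exact Or.inr (Or.inr (Or.inl
                (by simp only [Set.mem_setOf_eq, primeF, dif_pos hmk]; exact h2)))
            · exact Or.inr (Or.inr (Or.inr
                (by simp only [Set.mem_setOf_eq, dprimeF, dif_pos hmk]; exact h2)))
      rcases usplit4 U hA himp with hB | hB | hB | hB
      · exact Or.inr ⟨m + 1, g, hg, Or.inl ((mkQ_eq U).mpr hB)⟩
      · exact Or.inr ⟨m + 1, g, hg, Or.inr (Or.inl ((mkQ_eq U).mpr hB))⟩
      · exact Or.inr ⟨m + 1, g, hg, Or.inr (Or.inr ((mkQ_eq U).mpr hB))⟩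
      · rcases Ultrafilter.union_mem_iff.mp hB with hB | hB
        · exact Or.inr ⟨m, a1, ha1, Or.inr (Or.inl ((mkQ_eq U).mpr hB))⟩
        rcases Ultrafilter.union_mem_iff.mp hB with hB | hB
        · exact Or.inr ⟨m, a1, ha1, Or.inr (Or.inr ((mkQ_eq U).mpr hB))⟩
        rcases Ultrafilter.union_mem_iff.mp hB with hB | hB
        · exact Or.inr ⟨m, b1, hb1, Or.inr (Or.inl ((mkQ_eq U).mpr hB))⟩
        · exact Or.inr ⟨m, b1, hb1, Or.inr (Or.inr ((mkQ_eq U).mpr hB))⟩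
  · -- a = primeF n g
    have h1 : {k | Le k (primeF n g k) (bf k)} ∈ U := hab
    have hA : {k | bf k = primeF n g k} ∈ U := by
      filter_upwards [h1, ge_mem U hU n] with k hk1 hk2
      simp only [primeF, dif_pos hk2] at hk1 ⊢
      exact prime_le hk1
    exact Or.inr ⟨n, g, hg, Or.inr (Or.inl ((mkQ_eq U).mpr hA))⟩
  · have h1 : {k | Le k (dprimeF n g k) (bf k)} ∈ U := hab
    have hA : {k | bf k = dprimeF n g k} ∈ U := by
      filter_upwards [h1, ge_mem U hU n] with k hk1 hk2
      simp only [dprimeF, dif_pos hk2] at hk1 ⊢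
      exact dprime_le hk1
    exact Or.inr ⟨n, g, hg, Or.inr (Or.inr ((mkQ_eq U).mpr hA))⟩

end Cloud

section CloudGLB
variable (U : Ultrafilter ℕ)

lemma node_inj {k n : ℕ} {h1 h2 : n ≤ k} {x y : N n}
    (h : (Elt.node n h1 x : Elt k) = .node n h2 y) : x = y := by
  simp only [Elt.node.injEq] at h
  exact eq_of_heq h.2

lemma node_inj_level {k n m : ℕ} {h1 : n ≤ k} {h2 : m ≤ k} {x : N n} {y : N m}
    (h : (Elt.node n h1 x : Elt k) = .node m h2 y) : n = m := by
  simp only [Elt.node.injEq] at h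
  exact h.1

/-- The set of indices where `cf` is a node at level `n+1` containing `g`. -/
def Bst (cf : ∀ k, Elt k) (n : ℕ) (g : N n) : Set ℕ :=
  {k | ∃ (h1 : n + 1 ≤ k) (e : N (n + 1)), g ∈ e.1 ∧ cf k = .node (n + 1) h1 e}

lemma cloud_glb (hU : ∀ i : ℕ, U ≠ pure i) (S : Set (Fin 4)) {S' : Set (UProd U Elt)}
    (hsub : S' ⊆ cloud U S) {c : UProd U Elt} (hglb : IsGLB S' c) : c ∈ cloud U S := by
  classical
  by_cases hcS : c ∈ S'
  · exact hsub hcS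
  by_contra hgoal
  obtain ⟨cf, rfl⟩ := mkQ_surjective U c
  have hcp : mkQ U cf ≠ mkQ U pF := fun hh => hgoal (Or.inl hh)
  rcases S'.eq_empty_or_nonempty with rfl | ⟨t0, ht0⟩
  · have h1 : mkQ U qF ≤ mkQ U cf := hglb.2 (fun x hx => absurd hx (Set.notMem_empty x))
    have h2 : mkQ U pF ≤ mkQ U cf := hglb.2 (fun x hx => absurd hx (Set.notMem_empty x))
    obtain ⟨k, hk1, hk2⟩ := Filter.nonempty_of_mem (Filter.inter_mem h1 h2)
    have hp : cf k = .p := p_le hk2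
    have hk1' : Le k Elt.q (cf k) := hk1
    rw [hp] at hk1'
    rcases q_le hk1' with h3 | ⟨x, h3 | h3⟩ <;> simp at h3
  -- classification of the elements of `S'`
  have key : ∀ t ∈ S', t = mkQ U pF ∨
      ∃ n g, g ∈ Gd S n ∧ (t = mkQ U (primeF n g) ∨ t = mkQ U (dprimeF n g)) ∧
        Bst cf n g ∈ U := by
    intro t ht
    have hct : mkQ U cf ≤ t := hglb.1 ht
    have hcnet : mkQ U cf ≠ t := fun hh => hcS (hh ▸ ht)
    rcases hsub ht with rfl | ⟨n, g, hg, rfl | rfl | rfl⟩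
    · exact Or.inl rfl
    · exfalso
      have h1 : {k | Le k (cf k) (nodeF n g k)} ∈ U := hct
      have hne : {k | cf k = nodeF n g k}ᶜ ∈ U := Ultrafilter.compl_mem_iff_notMem.mpr
        (fun hh => hcnet ((mkQ_eq U).mpr hh))
      obtain ⟨k, hk1, hk2, hk3⟩ := Filter.nonempty_of_mem
        (Filter.inter_mem h1 (Filter.inter_mem hne (ge_mem U hU n)))
      have hk3' : n ≤ k := hk3
      have hk1' : Le k (cf k) (nodeF n g k) := hk1
      simp only [nodeF, dif_pos hk3'] at hk1'
      exact hk2 (show cf k = nodeF n g k by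
        simp only [nodeF, dif_pos hk3']; exact Le.eq_of_le_node hk1')
    · refine Or.inr ⟨n, g, hg, Or.inl rfl, ?_⟩
      have h1 : {k | Le k (cf k) (primeF n g k)} ∈ U := hct
      have hne : {k | cf k = primeF n g k}ᶜ ∈ U := Ultrafilter.compl_mem_iff_notMem.mpr
        (fun hh => hcnet ((mkQ_eq U).mpr hh))
      have hA : {k | n ≤ k ∧ Le k (cf k) (primeF n g k) ∧ ¬ cf k = primeF n g k} ∈ U := by
        filter_upwards [h1, hne, ge_mem U hU n] with k hk1 hk2 hk3
        exact ⟨hk3, hk1, hk2⟩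
      have himp : ∀ k ∈ {k | n ≤ k ∧ Le k (cf k) (primeF n g k) ∧ ¬ cf k = primeF n g k},
          k ∈ {k | cf k = nodeF n g k} ∨ k ∈ Bst cf n g ∨ k ∈ {k | n = k} := by
        rintro k ⟨hk3, hk1, hk2⟩
        have hk1' : Le k (cf k) (.prime n hk3 g) := by
          simpa only [primeF, dif_pos hk3] using hk1
        rcases le_prime hk1' with h2 | h2 | ⟨he1, e, hge, h2⟩ | ⟨hnk, h2⟩
        · exact absurd (show cf k = primeF n g k by
            simp only [primeF, dif_pos hk3]; exact h2) hk2
        · exact Or.inl (by simp only [Set.mem_setOf_eq, nodeF, dif_pos hk3]; exact h2)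
        · exact Or.inr (Or.inl ⟨he1, e, hge, h2⟩)
        · exact Or.inr (Or.inr hnk)
      rcases usplit3 U hA himp with hB | hB | hB
      · exact absurd (Or.inr ⟨n, g, hg, Or.inl ((mkQ_eq U).mpr hB)⟩) hgoal
      · exact hB
      · exact absurd hB (not_mem_of_finite U hU
          ((Set.finite_singleton n).subset (fun k hk => by simpa using hk.symm)))
    · refine Or.inr ⟨n, g, hg, Or.inr rfl, ?_⟩
      have h1 : {k | Le k (cf k) (dprimeF n g k)} ∈ U := hct
      have hne : {k | cf k = dprimeF n g k}ᶜ ∈ U := Ultrafilter.compl_mem_iff_notMem.mpr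
        (fun hh => hcnet ((mkQ_eq U).mpr hh))
      have hA : {k | n ≤ k ∧ Le k (cf k) (dprimeF n g k) ∧ ¬ cf k = dprimeF n g k} ∈ U := by
        filter_upwards [h1, hne, ge_mem U hU n] with k hk1 hk2 hk3
        exact ⟨hk3, hk1, hk2⟩
      have himp : ∀ k ∈ {k | n ≤ k ∧ Le k (cf k) (dprimeF n g k) ∧ ¬ cf k = dprimeF n g k},
          k ∈ {k | cf k = nodeF n g k} ∨ k ∈ Bst cf n g ∨ k ∈ {k | n = k} := by
        rintro k ⟨hk3, hk1, hk2⟩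
        have hk1' : Le k (cf k) (.dprime n hk3 g) := by
          simpa only [dprimeF, dif_pos hk3] using hk1
        rcases le_dprime hk1' with h2 | h2 | ⟨he1, e, hge, h2⟩ | ⟨hnk, h2⟩
        · exact absurd (show cf k = dprimeF n g k by
            simp only [dprimeF, dif_pos hk3]; exact h2) hk2
        · exact Or.inl (by simp only [Set.mem_setOf_eq, nodeF, dif_pos hk3]; exact h2)
        · exact Or.inr (Or.inl ⟨he1, e, hge, h2⟩)
        · exact Or.inr (Or.inr hnk)
      rcases usplit3 U hA himp with hB | hB | hB
      · exact absurd (Or.inr ⟨n, g, hg, Or.inl ((mkQ_eq U).mpr hB)⟩) hgoal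
      · exact hB
      · exact absurd hB (not_mem_of_finite U hU
          ((Set.finite_singleton n).subset (fun k hk => by simpa using hk.symm)))
  -- is there an element of the second kind?
  by_cases hBt : ∃ t ∈ S', ∃ n g, g ∈ Gd S n ∧
      (t = mkQ U (primeF n g) ∨ t = mkQ U (dprimeF n g)) ∧ Bst cf n g ∈ U
  · obtain ⟨t1, ht1, n1, g1, hg1, ht1eq, hB1⟩ := hBt
    -- all elements have the same level, and are prime/dprime type
    have key2 : ∀ t ∈ S', ∃ g, g ∈ Gd S n1 ∧
        (t = mkQ U (primeF n1 g) ∨ t = mkQ U (dprimeF n1 g)) ∧ Bst cf n1 g ∈ U := by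
      intro t ht
      rcases key t ht with rfl | ⟨n, g, hg, heq, hB⟩
      · exfalso
        have hct : mkQ U cf ≤ mkQ U pF := hglb.1 ht
        obtain ⟨k, hk1, hk2⟩ := Filter.nonempty_of_mem (Filter.inter_mem hct hB1)
        obtain ⟨h1, e, hge, he⟩ := hk2
        have hk1' : Le k (cf k) Elt.p := hk1
        rw [he] at hk1'
        rcases le_p hk1' with h3 | ⟨h0, w, h3⟩
        · simp at h3
        · exact absurd (node_inj_level h3) (by omega)
      · have hnn : n = n1 := by
          obtain ⟨k, hk1, hk2⟩ := Filter.nonempty_of_mem (Filter.inter_mem hB hB1)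
          obtain ⟨ha1, e1, hge1, he1⟩ := hk1
          obtain ⟨ha2, e2, hge2, he2⟩ := hk2
          have := node_inj_level (he1.symm.trans he2)
          omega
        subst hnn
        exact ⟨g, hg, heq, hB⟩
    by_cases hex : ∃ t ∈ S', ∃ g, g ∈ Gd S n1 ∧
        (t = mkQ U (primeF n1 g) ∨ t = mkQ U (dprimeF n1 g)) ∧ Bst cf n1 g ∈ U ∧ g ≠ g1
    · obtain ⟨t2, ht2, g2, hg2, ht2eq, hB2, hne12⟩ := hex
      set E : N (n1 + 1) := ⟨s(g2, g1), by
        simp only [Sym2.mk_isDiag_iff]; exact hne12⟩ with hEdef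
      have hE : {k | cf k = nodeF (n1 + 1) E k} ∈ U := by
        filter_upwards [hB1, hB2] with k hk1 hk2
        obtain ⟨ha1, e1, hge1, he1⟩ := hk1
        obtain ⟨ha2, e2, hge2, he2⟩ := hk2
        have he12 : e2 = e1 := node_inj (he2.symm.trans he1)
        subst he12
        have hEe : E = e2 := by
          apply Subtype.ext
          rw [hEdef]
          exact ((Sym2.mem_and_mem_iff hne12).mp ⟨hge2, hge1⟩).symm
        simp only [nodeF, dif_pos ha2]
        rw [hEe]
        exact he2
      refine hgoal (Or.inr ⟨n1 + 1, E, ?_, Or.inl ((mkQ_eq U).mpr hE)⟩)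
      intro a ha
      rcases Sym2.mem_iff.mp ha with rfl | rfl
      · exact hg2
      · exact hg1
    · -- all elements are prime/dprime over g1 : build the partner lower bound
      have hall2 : ∀ t ∈ S', t = mkQ U (primeF n1 g1) ∨ t = mkQ U (dprimeF n1 g1) := by
        intro t ht
        obtain ⟨g, hg, heq, hB⟩ := key2 t ht
        by_cases hgeq : g = g1
        · subst hgeq; exact heq
        · exact absurd ⟨t, ht, g, hg, heq, hB, hgeq⟩ hex
      obtain ⟨e0, -, -, -, -, -⟩ := threeN (n1 + 1)
      have hc0 : ∀ k, ∃ e' : N (n1 + 1), g1 ∈ e'.1 ∧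
          (∀ (h1 : n1 + 1 ≤ k) (e : N (n1 + 1)), cf k = .node (n1 + 1) h1 e → e' ≠ e) := by
        intro k
        by_cases hck : ∃ (h1 : n1 + 1 ≤ k) (e : N (n1 + 1)), cf k = .node (n1 + 1) h1 e
        · obtain ⟨h1, e, he⟩ := hck
          obtain ⟨e', he'1, he'2⟩ := exists_other_e g1 e
          refine ⟨e', he'1, fun h1' e2 he2 => ?_⟩
          have : e = e2 := node_inj (he.symm.trans he2)
          rw [← this]
          exact he'2
        · obtain ⟨e', he'1, -⟩ := exists_other_e g1 e0
          exact ⟨e', he'1, fun h1' e2 he2 => absurd ⟨h1', e2, he2⟩ hck⟩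
      choose ez hez1 hez2 using hc0
      have hlb : mkQ U (fun k => if h : n1 + 1 ≤ k then .node (n1 + 1) h (ez k) else .q)
          ∈ lowerBounds S' := by
        intro t ht
        rcases hall2 t ht with rfl | rfl
        · rw [mkQ_le]
          filter_upwards [ge_mem U hU (n1 + 1)] with k hk
          simp only [dif_pos hk, primeF, dif_pos (Nat.le_of_succ_le hk)]
          exact Le.e_prime n1 hk (ez k) g1 (hez1 k)
        · rw [mkQ_le]
          filter_upwards [ge_mem U hU (n1 + 1)] with k hk
          simp only [dif_pos hk, dprimeF, dif_pos (Nat.le_of_succ_le hk)]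
          exact Le.e_dprime n1 hk (ez k) g1 (hez1 k)
      have hzc := hglb.2 hlb
      obtain ⟨k, hk1, hk2⟩ := Filter.nonempty_of_mem (Filter.inter_mem hzc hB1)
      obtain ⟨h1, e, hge, he⟩ := hk2
      have hk1' : Le k (if h : n1 + 1 ≤ k then (.node (n1 + 1) h (ez k) : Elt k) else .q)
          (cf k) := hk1
      rw [he] at hk1'
      simp only [dif_pos h1] at hk1'
      exact hez2 k h1 e he (node_inj (Le.eq_of_le_node hk1'))
  · -- all elements are `p`
    have hall : ∀ t ∈ S', t = mkQ U pF := by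
      intro t ht
      rcases key t ht with rfl | ⟨n, g, hg, heq, hB⟩
      · rfl
      · exact absurd ⟨t, ht, n, g, hg, heq, hB⟩ hBt
    have hple : mkQ U pF ≤ mkQ U cf := hglb.2 (fun t ht => le_of_eq (hall t ht).symm)
    have hcle : mkQ U cf ≤ mkQ U pF := (hall t0 ht0) ▸ hglb.1 ht0
    exact hcp (le_antisymm hcle hple)

end CloudGLB

section Join
variable (U : Ultrafilter ℕ)

lemma le_pF_classify (hU : ∀ i : ℕ, U ≠ pure i) {tf : ∀ k, Elt k}
    (hle : mkQ U tf ≤ mkQ U pF) :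
    mkQ U tf = mkQ U pF ∨ ∃ x : N 0, mkQ U tf = mkQ U (nodeF 0 x) := by
  classical
  by_cases hp : {k | tf k = pF k} ∈ U
  · exact Or.inl ((mkQ_eq U).mpr hp)
  right
  have hne' : {k | tf k = pF k}ᶜ ∈ U := Ultrafilter.compl_mem_iff_notMem.mpr hp
  have h1 : {k | Le k (tf k) (pF k)} ∈ U := hle
  have hA : {k | Le k (tf k) Elt.p ∧ ¬ tf k = Elt.p} ∈ U := by
    filter_upwards [h1, hne'] with k hk1 hk2
    exact ⟨hk1, hk2⟩
  have hx : ∀ k, ∃ x : N 0, (Le k (tf k) Elt.p ∧ ¬ tf k = Elt.p) →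
      ∃ h0, tf k = .node 0 h0 x := by
    intro k
    by_cases hk : Le k (tf k) Elt.p ∧ ¬ tf k = Elt.p
    · rcases le_p hk.1 with h | ⟨h0, w, hw⟩
      · exact absurd h hk.2
      · exact ⟨w, fun _ => ⟨h0, hw⟩⟩
    · exact ⟨show N 0 from (0 : Fin 4), fun hk' => absurd hk' hk⟩
  choose xt hxt using hx
  obtain ⟨x0, hx0⟩ := const_of_finite U xt hA
  refine ⟨x0, (mkQ_eq U).mpr ?_⟩
  filter_upwards [hx0] with k hk
  obtain ⟨hk1, hk2⟩ := hk
  obtain ⟨h0, hw⟩ := hxt k hk1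
  simp only [nodeF, dif_pos (Nat.zero_le k)]
  rw [hw, hk2]

lemma cloud_join (hU : ∀ i : ℕ, U ≠ pure i) (u : Fin 4) {T : Set (UProd U Elt)}
    {c : UProd U Elt} (hlub : IsLUB T c) (hc : c ∈ cloud U ({u}ᶜ : Set (Fin 4))) :
    ∃ t ∈ T, t ∈ cloud U ({u}ᶜ : Set (Fin 4)) := by
  rcases lub_classify U hlub with hcT | rfl
  · exact ⟨c, hcT, hc⟩
  by_contra hno
  push_neg at hno
  have hall : ∀ t ∈ T, t = mkQ U (nodeF 0 u) := by
    intro t ht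
    obtain ⟨tf, rfl⟩ := mkQ_surjective U t
    rcases le_pF_classify U hU (hlub.1 ht) with heq | ⟨x, heq⟩
    · exact absurd (Or.inl heq) (hno _ ht)
    · by_cases hxu : x = u
      · rw [hxu] at heq
        exact heq
      · exact absurd (Or.inr ⟨0, x, (by exact hxu), Or.inl heq⟩) (hno _ ht)
  rcases T.eq_empty_or_nonempty with rfl | ⟨t0, ht0⟩
  · have h1 : mkQ U pF ≤ mkQ U qF := hlub.2 (fun x hx => absurd hx (Set.notMem_empty x))
    obtain ⟨k, hk1⟩ := Filter.nonempty_of_mem h1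
    have hk1' : Le k Elt.p Elt.q := hk1
    have := p_le hk1'
    simp at this
  · have hub : mkQ U (nodeF 0 u) ∈ upperBounds T := fun t ht => le_of_eq (hall t ht)
    have h1 : mkQ U pF ≤ mkQ U (nodeF 0 u) := hlub.2 hub
    obtain ⟨k, hk1⟩ := Filter.nonempty_of_mem h1
    have hk1' : Le k Elt.p (nodeF 0 u k) := hk1
    have h2 := p_le hk1'
    simp only [nodeF, dif_pos (Nat.zero_le k)] at h2
    cases h2

lemma cloud_good (hU : ∀ i : ℕ, U ≠ pure i) (u : Fin 4) :
    Good U (· ∈ cloud U ({u}ᶜ : Set (Fin 4))) := by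
  apply good_of
  · exact fun a b hab ha => cloud_upset U hU _ a ha b hab
  · intro S' hS' c hglb hall
    exact cloud_glb U hU _ (fun t ht => hall t ht) hglb
  · intro T hT c hlub hc
    exact cloud_join U hU u hlub hc

end Join

section Sep
variable (U : Ultrafilter ℕ)

lemma eval_ge (hU : ∀ i : ℕ, U ≠ pure i) {x y : ∀ k, Elt k}
    (h : mkQ U x = mkQ U y) (n : ℕ) : ∃ k, n ≤ k ∧ x k = y k := by
  obtain ⟨k, hk1, hk2⟩ := Filter.nonempty_of_mem
    (Filter.inter_mem ((mkQ_eq U).mp h) (ge_mem U hU n))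
  exact ⟨k, hk2, hk1⟩

lemma shape_ne_pF (hU : ∀ i : ℕ, U ≠ pure i) {n : ℕ} {g : N n} :
    mkQ U (nodeF n g) ≠ mkQ U pF ∧ mkQ U (primeF n g) ≠ mkQ U pF ∧
    mkQ U (dprimeF n g) ≠ mkQ U pF := by
  refine ⟨fun h => ?_, fun h => ?_, fun h => ?_⟩ <;>
  · obtain ⟨k, hk, he⟩ := eval_ge U hU h n
    simp only [nodeF, primeF, dprimeF, dif_pos hk, pF] at he
    cases he

/-- Transport of `Gd`-membership along an equality of shapes. -/
lemma mem_cloud_of_shape (hU : ∀ i : ℕ, U ≠ pure i) {S : Set (Fin 4)} {n : ℕ} {g : N n}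
    (hb : mkQ U (nodeF n g) ∈ cloud U S ∨ mkQ U (primeF n g) ∈ cloud U S ∨
      mkQ U (dprimeF n g) ∈ cloud U S) : g ∈ Gd S n := by
  rcases hb with hb | hb | hb
  · rcases hb with h | ⟨n', g', hg', h | h | h⟩
    · exact absurd h (shape_ne_pF U hU).1
    · obtain ⟨k, hk, he⟩ := eval_ge U hU h (max n n')
      simp only [nodeF, dif_pos (le_trans (le_max_left n n') hk),
        dif_pos (le_trans (le_max_right n n') hk)] at he
      injection he with e1 e2
      subst e1
      rw [eq_of_heq e2]
      exact hg'
    · obtain ⟨k, hk, he⟩ := eval_ge U hU h (max n n')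
      simp only [nodeF, primeF, dif_pos (le_trans (le_max_left n n') hk),
        dif_pos (le_trans (le_max_right n n') hk)] at he
      cases he
    · obtain ⟨k, hk, he⟩ := eval_ge U hU h (max n n')
      simp only [nodeF, dprimeF, dif_pos (le_trans (le_max_left n n') hk),
        dif_pos (le_trans (le_max_right n n') hk)] at he
      cases he
  · rcases hb with h | ⟨n', g', hg', h | h | h⟩
    · exact absurd h (shape_ne_pF U hU).2.1
    · obtain ⟨k, hk, he⟩ := eval_ge U hU h (max n n')
      simp only [nodeF, primeF, dif_pos (le_trans (le_max_left n n') hk),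
        dif_pos (le_trans (le_max_right n n') hk)] at he
      cases he
    · obtain ⟨k, hk, he⟩ := eval_ge U hU h (max n n')
      simp only [primeF, dif_pos (le_trans (le_max_left n n') hk),
        dif_pos (le_trans (le_max_right n n') hk)] at he
      injection he with e1 e2
      subst e1
      rw [eq_of_heq e2]
      exact hg'
    · obtain ⟨k, hk, he⟩ := eval_ge U hU h (max n n')
      simp only [primeF, dprimeF, dif_pos (le_trans (le_max_left n n') hk),
        dif_pos (le_trans (le_max_right n n') hk)] at he
      cases he
  · rcases hb with h | ⟨n', g', hg', h | h | h⟩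
    · exact absurd h (shape_ne_pF U hU).2.2
    · obtain ⟨k, hk, he⟩ := eval_ge U hU h (max n n')
      simp only [nodeF, dprimeF, dif_pos (le_trans (le_max_left n n') hk),
        dif_pos (le_trans (le_max_right n n') hk)] at he
      cases he
    · obtain ⟨k, hk, he⟩ := eval_ge U hU h (max n n')
      simp only [primeF, dprimeF, dif_pos (le_trans (le_max_left n n') hk),
        dif_pos (le_trans (le_max_right n n') hk)] at he
      cases he
    · obtain ⟨k, hk, he⟩ := eval_ge U hU h (max n n')
      simp only [dprimeF, dif_pos (le_trans (le_max_left n n') hk),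
        dif_pos (le_trans (le_max_right n n') hk)] at he
      injection he with e1 e2
      subst e1
      rw [eq_of_heq e2]
      exact hg'

lemma node0_le_shape (hU : ∀ i : ℕ, U ≠ pure i) {x : N 0} {b : UProd U Elt}
    (hbeq : b = mkQ U (nodeF 0 x) ∨ b = mkQ U (primeF 0 x) ∨ b = mkQ U (dprimeF 0 x)) :
    mkQ U (nodeF 0 x) ≤ b := by
  rcases hbeq with rfl | rfl | rfl
  · exact le_refl _
  · rw [mkQ_le]
    filter_upwards [ge_mem U hU 0] with k hk
    simp only [nodeF, primeF, dif_pos hk]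
    exact Le.node_prime 0 hk x
  · rw [mkQ_le]
    filter_upwards [ge_mem U hU 0] with k hk
    simp only [nodeF, dprimeF, dif_pos hk]
    exact Le.node_dprime 0 hk x

lemma separation (hU : ∀ i : ℕ, U ≠ pure i) :
    ∀ a b : UProd U Elt, ¬ a ≤ b → ∃ f, Good U f ∧ f a ∧ ¬ f b := by
  intro a b hab
  by_cases hap : a ≤ mkQ U pF
  case neg =>
    exact ⟨fun c => a ≤ c, good_up U a hap, le_refl a, hab⟩
  case pos =>
  have hbp : b ≠ mkQ U pF := fun hh => hab (hh ▸ hap)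
  obtain ⟨af, ha⟩ := mkQ_surjective U a
  have hacl := le_pF_classify U hU (ha ▸ hap)
  rw [← ha] at hacl
  -- `hacl : a = pU ∨ ∃ x, a = nodeF 0 x`
  -- helper to conclude, given a suitable u
  have main : ∀ u : Fin 4, (a = mkQ U pF ∨ ∃ x : N 0, a = mkQ U (nodeF 0 x) ∧ x ≠ u) →
      b ∉ cloud U ({u}ᶜ : Set (Fin 4)) → ∃ f, Good U f ∧ f a ∧ ¬ f b := by
    rintro u hau hbu
    refine ⟨(· ∈ cloud U ({u}ᶜ : Set (Fin 4))), cloud_good U hU u, ?_, hbu⟩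
    rcases hau with rfl | ⟨x, rfl, hxu⟩
    · exact Or.inl rfl
    · exact Or.inr ⟨0, x, (by exact hxu), Or.inl rfl⟩
  by_cases hbs : ∃ (n : ℕ) (g : N n), b = mkQ U (nodeF n g) ∨ b = mkQ U (primeF n g) ∨
      b = mkQ U (dprimeF n g)
  · obtain ⟨n, g, hbeq⟩ := hbs
    rcases n with _ | m
    · -- level-0 shape : take u := g
      have hbu : b ∉ cloud U ({(g : Fin 4)}ᶜ : Set (Fin 4)) := by
        intro hmem
        have : g ∈ Gd ({(g : Fin 4)}ᶜ : Set (Fin 4)) 0 := by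
          apply mem_cloud_of_shape U hU (n := 0) (g := g)
          rcases hbeq with rfl | rfl | rfl
          · exact Or.inl hmem
          · exact Or.inr (Or.inl hmem)
          · exact Or.inr (Or.inr hmem)
        have h2 : (g : Fin 4) ∈ ({(g : Fin 4)}ᶜ : Set (Fin 4)) := this
        exact h2 rfl
      refine main (g : Fin 4) ?_ hbu
      rcases hacl with rfl | ⟨x, rfl⟩
      · exact Or.inl rfl
      · refine Or.inr ⟨x, rfl, ?_⟩
        intro hxg
        exact hab (node0_le_shape U hU (by rw [hxg]; exact hbeq))
    · -- higher shape : use a mandatory leaf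
      obtain ⟨u1, u2, hu12, hmand⟩ := mandatory m g
      have hbu : ∀ u : Fin 4, (u = u1 ∨ u = u2) →
          b ∉ cloud U ({u}ᶜ : Set (Fin 4)) := by
        intro u huu hmem
        have hgd : g ∈ Gd ({u}ᶜ : Set (Fin 4)) (m + 1) := by
          apply mem_cloud_of_shape U hU (n := m + 1) (g := g)
          rcases hbeq with rfl | rfl | rfl
          · exact Or.inl hmem
          · exact Or.inr (Or.inl hmem)
          · exact Or.inr (Or.inr hmem)
        obtain ⟨hm1, hm2⟩ := hmand _ hgd
        rcases huu with rfl | rfl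
        · simp at hm1
        · simp at hm2
      rcases hacl with rfl | ⟨x, rfl⟩
      · exact main u1 (Or.inl rfl) (hbu u1 (Or.inl rfl))
      · by_cases hx1 : u1 = x
        · refine main u2 (Or.inr ⟨x, rfl, fun hh => hu12 (hx1.trans hh)⟩)
            (hbu u2 (Or.inr rfl))
        · exact main u1 (Or.inr ⟨x, rfl, fun hh => hx1 hh.symm⟩) (hbu u1 (Or.inl rfl))
  · -- b is not a shape at all
    have hbu : ∀ u : Fin 4, b ∉ cloud U ({u}ᶜ : Set (Fin 4)) := by
      rintro u (hmem | ⟨n, g, hg, hcase⟩)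
      · exact hbp hmem
      · exact hbs ⟨n, g, hcase⟩
    rcases hacl with rfl | ⟨x, rfl⟩
    · exact main 0 (Or.inl rfl) (hbu 0)
    · obtain ⟨u, hux⟩ : ∃ u : Fin 4, u ≠ x := by
        rcases em ((x : N 0) = (show N 0 from (0 : Fin 4))) with hx | hx
        · exact ⟨1, fun hh => absurd (congrArg Fin.val (hh.trans hx)) (by decide)⟩
        · exact ⟨0, fun hh => hx hh.symm⟩
      exact main u (Or.inr ⟨x, rfl, fun hh => hux hh.symm⟩) (hbu u)

end Sep

end S14

/-- For a non-principal ultrafilter `U` on `ω`, the ultraproduct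
`∏_U P_i` of the posets `P_0, P_1, P_2, …` is `(ω,ω)`-representable. -/
theorem statement14 (U : Ultrafilter ℕ) (hU : ∀ i : ℕ, U ≠ pure i) :
    IsRepresentable ℵ₀ ℵ₀ (UProd U Elt) := by
  exact S14.representable_of_separating U (S14.separation U hU)
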